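/- If G ~ IG(αt, β) with α, β, t > 0, then for every r ∈ ℝ the r-th moment of G is E[G^r] = (αt/β)^r · K_{r-1/2}(αβt) / K_{-1/2}(αβt), where K_ν is the modified Bessel function of the third kind. -/

import Mathlib

open MeasureTheory Real Set

/-- Integral representation of the modified Bessel function of the third kind. -/
noncomputable def besselK (ν ω : ℝ) : ℝ :=
  (1/2) * ∫ x in Ioi (0:ℝ), x ^ (ν - 1) * Real.exp (-(ω/2) * (x + x⁻¹))

/-- The inverse Gaussian density IG(a, b). -/
noncomputable def igPdf (a b x : ℝ) : ℝ :=
  (2 * π) ^ (-(1:ℝ)/2) * a * x ^ (-(3:ℝ)/2) *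
    Real.exp (a * b - (1/2) * (a^2 * x⁻¹ + b^2 * x))

lemma int_plus (ω : ℝ) (hω : 0 < ω) :
    IntegrableOn (fun s : ℝ => Real.exp (-(ω/2) * (s^2 + (s^2)⁻¹))) (Ioi 0) := by
  apply Integrable.mono' ((integrable_exp_neg_mul_sq (by positivity : (0:ℝ) < ω/2)).restrict (s := Ioi 0))
  · exact (by measurability : Measurable fun s : ℝ => Real.exp (-(ω/2) * (s^2 + (s^2)⁻¹))).aestronglyMeasurable
  · filter_upwards with s
    rw [Real.norm_eq_abs, Real.abs_exp]
    apply Real.exp_le_exp.mpr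
    have h1 : (0:ℝ) ≤ (s^2)⁻¹ := by positivity
    nlinarith

lemma int_minus (ω : ℝ) (hω : 0 < ω) :
    IntegrableOn (fun s : ℝ => (s^2)⁻¹ * Real.exp (-(ω/2) * (s^2 + (s^2)⁻¹))) (Ioi 0) := by
  apply Integrable.mono' (((integrable_exp_neg_mul_sq (by positivity : (0:ℝ) < ω/2)).const_mul (2/ω)).restrict (s := Ioi 0))
  · exact (by measurability : Measurable fun s : ℝ => (s^2)⁻¹ * Real.exp (-(ω/2) * (s^2 + (s^2)⁻¹))).aestronglyMeasurable
  · filter_upwards with s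
    rw [Real.norm_eq_abs, abs_mul, Real.abs_exp, abs_inv, abs_of_nonneg (sq_nonneg s)]
    have key : (s^2)⁻¹ * Real.exp (-(ω/2) * (s^2)⁻¹) ≤ 2/ω := by
      set y := (ω/2) * (s^2)⁻¹ with hy
      have hy0 : 0 ≤ y := by positivity
      have h1 : y ≤ Real.exp y := (Real.add_one_le_exp y).trans' (by linarith)
      have h2 : (s^2)⁻¹ = (2/ω) * y := by
        have hne : (2/ω) * (ω/2) = 1 := by field_simp
        calc (s^2)⁻¹ = ((2/ω) * (ω/2)) * (s^2)⁻¹ := by rw [hne, one_mul]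
          _ = (2/ω) * y := by rw [hy]; ring
      rw [show -(ω/2) * (s^2)⁻¹ = -y by rw [hy]; ring, h2, Real.exp_neg, mul_assoc]
      have h3 : y * (Real.exp y)⁻¹ ≤ 1 := by
        rw [← div_eq_mul_inv, div_le_one (Real.exp_pos y)]; exact h1
      calc 2/ω * (y * (Real.exp y)⁻¹) ≤ 2/ω * 1 := by
            apply mul_le_mul_of_nonneg_left h3 (by positivity)
        _ = 2/ω := mul_one _
    calc (s^2)⁻¹ * Real.exp (-(ω/2) * (s^2 + (s^2)⁻¹))
        = ((s^2)⁻¹ * Real.exp (-(ω/2) * (s^2)⁻¹)) * Real.exp (-(ω/2) * s^2) := by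
          rw [mul_assoc, ← Real.exp_add]; congr 1; ring
      _ ≤ 2/ω * Real.exp (-(ω/2) * s^2) := by
          apply mul_le_mul_of_nonneg_right key (Real.exp_nonneg _)

lemma gauss_sub (ω : ℝ) (hω : 0 < ω) :
    ∫ s in Ioi (0:ℝ), (1 + (s^2)⁻¹) * Real.exp (-(ω/2) * (s - s⁻¹)^2)
      = Real.sqrt (2*π/ω) := by
  have hderiv : ∀ x ∈ Ioi (0:ℝ),
      HasDerivWithinAt (fun s : ℝ => s - s⁻¹) (1 + (x^2)⁻¹) (Ioi 0) x := by
    intro x hx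
    have h : HasDerivAt (fun s : ℝ => s - s⁻¹) (1 - -(x^2)⁻¹) x :=
      (hasDerivAt_id x).sub (hasDerivAt_inv (ne_of_gt hx))
    simpa [sub_neg_eq_add] using h.hasDerivWithinAt
  have hinj : InjOn (fun s : ℝ => s - s⁻¹) (Ioi 0) := by
    apply StrictMonoOn.injOn
    intro x hx y hy hxy
    have h2 : y⁻¹ < x⁻¹ := by
      rw [inv_lt_inv₀ (lt_trans hx hxy) hx]; exact hxy
    exact sub_lt_sub hxy h2
  have himg : (fun s : ℝ => s - s⁻¹) '' Ioi 0 = univ := by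
    apply eq_univ_of_forall
    intro u
    have hq : Real.sqrt (u^2+4) ^ 2 = u^2 + 4 := Real.sq_sqrt (by positivity)
    have hqu : -u < Real.sqrt (u^2+4) := by
      nlinarith [Real.sqrt_nonneg (u^2+4), abs_nonneg u, sq_abs u,
        neg_abs_le u, Real.sqrt_nonneg (u^2+4)]
    have hspos : 0 < (u + Real.sqrt (u^2+4))/2 := by linarith
    refine ⟨(u + Real.sqrt (u^2+4))/2, hspos, ?_⟩
    have hkey : ((u + Real.sqrt (u^2+4))/2) * ((u + Real.sqrt (u^2+4))/2 - u) = 1 := by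
      nlinarith [hq]
    have hinv : (u + Real.sqrt (u^2+4))/2 - u = ((u + Real.sqrt (u^2+4))/2)⁻¹ :=
      eq_inv_of_mul_eq_one_left (by rw [mul_comm]; exact hkey)
    simp only
    rw [← hinv]; ring
  have := integral_image_eq_integral_abs_deriv_smul measurableSet_Ioi hderiv hinj
      (fun u => Real.exp (-(ω/2) * u^2))
  rw [himg] at this
  have hL : ∫ x in (univ : Set ℝ), Real.exp (-(ω/2) * x^2) = Real.sqrt (2*π/ω) := by
    rw [setIntegral_univ, integral_gaussian]
    congr 1; field_simp
  rw [hL] at this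
  rw [this]
  refine setIntegral_congr_fun measurableSet_Ioi fun s hs => ?_
  have hs0 : (0:ℝ) < s := hs
  rw [smul_eq_mul, abs_of_pos (by positivity : (0:ℝ) < 1 + (s^2)⁻¹)]

lemma besselK_neg_half (ω : ℝ) (hω : 0 < ω) :
    besselK (-(1/2)) ω = Real.sqrt (π/(2*ω)) * Real.exp (-ω) := by
  have hM2 : ∫ x in Ioi (0:ℝ), x ^ (-(1/2) - 1 : ℝ) * Real.exp (-(ω/2) * (x + x⁻¹))
      = ∫ s in Ioi (0:ℝ), 2 * ((s^2)⁻¹ * Real.exp (-(ω/2) * (s^2 + (s^2)⁻¹))) := by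
    rw [← integral_comp_rpow_Ioi
      (fun x => x ^ (-(1/2) - 1 : ℝ) * Real.exp (-(ω/2) * (x + x⁻¹))) (p := 2) two_ne_zero]
    refine setIntegral_congr_fun measurableSet_Ioi fun s hs => ?_
    have hs0 : (0:ℝ) < s := hs
    have h2 : (s : ℝ) ^ (2:ℝ) = s ^ 2 := by
      rw [show (2:ℝ) = ((2:ℕ):ℝ) by norm_num, Real.rpow_natCast]
    have h1 : (s : ℝ) ^ ((2:ℝ)-1) = s := by norm_num
    have h3 : (s ^ 2 : ℝ) ^ (-(1/2) - 1 : ℝ) = (s^3)⁻¹ := by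
      calc (s ^ 2 : ℝ) ^ (-(1/2) - 1 : ℝ) = (s ^ (2:ℝ)) ^ (-(1/2) - 1 : ℝ) := by rw [h2]
        _ = s ^ ((2:ℝ) * (-(1/2) - 1)) := (Real.rpow_mul hs0.le _ _).symm
        _ = s ^ (-(3:ℝ)) := by norm_num
        _ = (s ^ (3:ℝ))⁻¹ := by rw [Real.rpow_neg hs0.le]
        _ = (s^3)⁻¹ := by rw [show (3:ℝ) = ((3:ℕ):ℝ) by norm_num, Real.rpow_natCast]
    rw [smul_eq_mul, h1, h2, h3]
    have h4 : |(2:ℝ)| = 2 := abs_two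
    rw [h4]
    field_simp
  have hK : besselK (-(1/2)) ω
      = ∫ s in Ioi (0:ℝ), (s^2)⁻¹ * Real.exp (-(ω/2) * (s^2 + (s^2)⁻¹)) := by
    rw [besselK, hM2, integral_const_mul]
    ring
  have hMP : ∫ s in Ioi (0:ℝ), (s^2)⁻¹ * Real.exp (-(ω/2) * (s^2 + (s^2)⁻¹))
      = ∫ s in Ioi (0:ℝ), Real.exp (-(ω/2) * (s^2 + (s^2)⁻¹)) := by
    rw [← integral_comp_rpow_Ioi
      (fun s => Real.exp (-(ω/2) * (s^2 + (s^2)⁻¹))) (p := -1) (by norm_num)]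
    refine setIntegral_congr_fun measurableSet_Ioi fun s hs => ?_
    have hs0 : (0:ℝ) < s := hs
    have ha : (s : ℝ) ^ (-1:ℝ) = s⁻¹ := Real.rpow_neg_one s
    have hb : (s : ℝ) ^ ((-1:ℝ)-1) = (s^2)⁻¹ := by
      rw [show (-1:ℝ)-1 = -(2:ℝ) by norm_num, Real.rpow_neg hs0.le,
        show (2:ℝ) = ((2:ℕ):ℝ) by norm_num, Real.rpow_natCast]
    rw [smul_eq_mul, ha, hb, abs_neg, abs_one, one_mul, inv_pow s 2, inv_inv]
    rw [add_comm ((s^2)⁻¹) (s^2)]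
  have hsplit : ∫ s in Ioi (0:ℝ), (1 + (s^2)⁻¹) * Real.exp (-(ω/2) * (s^2 + (s^2)⁻¹))
      = (∫ s in Ioi (0:ℝ), Real.exp (-(ω/2) * (s^2 + (s^2)⁻¹)))
        + ∫ s in Ioi (0:ℝ), (s^2)⁻¹ * Real.exp (-(ω/2) * (s^2 + (s^2)⁻¹)) := by
    rw [← integral_add (int_plus ω hω) (int_minus ω hω)]
    refine setIntegral_congr_fun measurableSet_Ioi fun s _ => by ring
  have hval : ∫ s in Ioi (0:ℝ), (1 + (s^2)⁻¹) * Real.exp (-(ω/2) * (s^2 + (s^2)⁻¹))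
      = Real.exp (-ω) * Real.sqrt (2*π/ω) := by
    rw [← gauss_sub ω hω, ← integral_const_mul]
    refine setIntegral_congr_fun measurableSet_Ioi fun s hs => ?_
    have hs0 : (0:ℝ) < s := hs
    have harg : s^2 + (s^2)⁻¹ = (s - s⁻¹)^2 + 2 := by field_simp; ring
    rw [harg, show -(ω/2)*((s-s⁻¹)^2+2) = (-(ω/2)*(s-s⁻¹)^2) + (-ω) by ring, Real.exp_add]
    ring
  have hsq : Real.sqrt (2*π/ω) = 2 * Real.sqrt (π/(2*ω)) := by
    rw [show 2*π/ω = 2^2 * (π/(2*ω)) by field_simp [hω.ne'],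
      Real.sqrt_mul (by positivity), Real.sqrt_sq (by norm_num)]
  rw [hK]
  rw [hMP] at hsplit ⊢
  rw [hsq] at hval
  linear_combination (hval - hsplit) / 2

lemma ig_moment_eq (a b r : ℝ) (ha : 0 < a) (hb : 0 < b) :
    ∫ x in Ioi (0:ℝ), x ^ r * igPdf a b x
      = (2*π)^(-(1:ℝ)/2) * a * Real.exp (a*b) * ((a/b)^(r - 1/2)) *
        (2 * besselK (r - 1/2) (a*b)) := by
  have hc : 0 < a/b := div_pos ha hb
  have step1 : ∫ x in Ioi (0:ℝ), x ^ r * igPdf a b x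
      = (a/b) • ∫ y in Ioi (0:ℝ), ((a/b)*y) ^ r * igPdf a b ((a/b)*y) := by
    rw [integral_comp_mul_left_Ioi (fun x => x ^ r * igPdf a b x) 0 hc, mul_zero, smul_smul,
      mul_inv_cancel₀ hc.ne', one_smul]
  rw [step1]
  have step2 : ∫ y in Ioi (0:ℝ), ((a/b)*y) ^ r * igPdf a b ((a/b)*y)
      = ∫ y in Ioi (0:ℝ), ((2*π)^(-(1:ℝ)/2) * a * Real.exp (a*b) * (a/b)^(r - 1/2 - 1)) *
          (y ^ (r - 1/2 - 1) * Real.exp (-(a*b/2) * (y + y⁻¹))) := by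
    refine setIntegral_congr_fun measurableSet_Ioi fun y hy => ?_
    have hy0 : (0:ℝ) < y := hy
    have hexp : a*b - (1/2) * (a^2 * ((a/b)*y)⁻¹ + b^2 * ((a/b)*y))
        = (-(a*b/2) * (y + y⁻¹)) + a*b := by
      field_simp
      ring
    have hr1 : ((a/b)*y) ^ r = (a/b)^r * y^r := Real.mul_rpow hc.le hy0.le
    have hr2 : ((a/b)*y) ^ (-(3:ℝ)/2) = (a/b)^(-(3:ℝ)/2) * y^(-(3:ℝ)/2) :=
      Real.mul_rpow hc.le hy0.le
    have hr3 : (a/b)^r * (a/b)^(-(3:ℝ)/2) = (a/b)^(r - 1/2 - 1) := by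
      rw [← Real.rpow_add hc]; congr 1; ring
    have hr4 : y^r * y^(-(3:ℝ)/2) = y^(r - 1/2 - 1) := by
      rw [← Real.rpow_add hy0]; congr 1; ring
    simp only [igPdf]
    rw [hr1, hr2, hexp, Real.exp_add, ← hr3, ← hr4]
    ring
  rw [step2, integral_const_mul, smul_eq_mul]
  simp only [besselK]
  have h5 : (a/b)^(r-1/2) = (a/b) * (a/b)^(r-1/2-1) := by
    calc (a/b)^(r-1/2) = (a/b)^(1+(r-1/2-1)) := by congr 1; ring
      _ = (a/b)^(1:ℝ) * (a/b)^(r-1/2-1) := Real.rpow_add hc 1 _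
      _ = (a/b) * (a/b)^(r-1/2-1) := by rw [Real.rpow_one]
  rw [h5]
  ring

theorem ig_moments (α β t r : ℝ) (hα : 0 < α) (hβ : 0 < β) (ht : 0 < t) :
    ∫ x in Ioi (0:ℝ), x ^ r * igPdf (α * t) β x
      = (α * t / β) ^ r * besselK (r - 1/2) (α * β * t) / besselK (-(1/2)) (α * β * t) := by
  have hab : 0 < α*t*β := by positivity
  rw [show α*β*t = α*t*β from by ring]
  rw [ig_moment_eq (α*t) β r (by positivity) hβ, besselK_neg_half _ hab]
  rw [eq_div_iff (by positivity : Real.sqrt (π/(2*(α*t*β))) * Real.exp (-(α*t*β)) ≠ 0)]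
  set K := besselK (r - 1/2) (α*t*β) with hK
  have hc : 0 < α*t/β := by positivity
  have h5 : (α*t/β)^(r-1/2) = (α*t/β)^r * (α*t/β)^(-(1:ℝ)/2) := by
    rw [← Real.rpow_add hc]; congr 1; ring
  have hexp : Real.exp (α*t*β) * Real.exp (-(α*t*β)) = 1 := by
    rw [← Real.exp_add]; simp
  have e1 : ((2*π)^(-(1:ℝ)/2))^2 = (2*π)⁻¹ := by
    rw [← Real.rpow_natCast ((2*π)^(-(1:ℝ)/2)) 2, ← Real.rpow_mul (by positivity : (0:ℝ) ≤ 2*π)]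
    norm_num [Real.rpow_neg_one]
  have e2 : ((α*t/β)^(-(1:ℝ)/2))^2 = (α*t/β)⁻¹ := by
    rw [← Real.rpow_natCast ((α*t/β)^(-(1:ℝ)/2)) 2, ← Real.rpow_mul hc.le]
    norm_num [Real.rpow_neg_one]
  have hone : (2*π)^(-(1:ℝ)/2) * (α*t) * ((α*t/β)^(-(1:ℝ)/2)) * 2 *
      Real.sqrt (π/(2*(α*t*β))) = 1 := by
    have hX : 0 < (2*π)^(-(1:ℝ)/2) * (α*t) * ((α*t/β)^(-(1:ℝ)/2)) * 2 *
        Real.sqrt (π/(2*(α*t*β))) := by positivity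
    have hsq : ((2*π)^(-(1:ℝ)/2) * (α*t) * ((α*t/β)^(-(1:ℝ)/2)) * 2 *
        Real.sqrt (π/(2*(α*t*β))))^2 = 1 := by
      rw [mul_pow, mul_pow, mul_pow, mul_pow, e1, e2,
        Real.sq_sqrt (by positivity : (0:ℝ) ≤ π/(2*(α*t*β)))]
      field_simp
    nlinarith [hX, hsq]
  rw [h5]
  linear_combination ((α*t/β)^r * K * (Real.exp (α*t*β) * Real.exp (-(α*t*β)))) * hone
    + ((α*t/β)^r * K) * hexp
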